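/- Let f ≥ 3 be an odd integer, let S = PSL₂(3^f), and let G be a group with Inn(S) ≤ G ≤ Aut(S) such that the quotient G/Inn(S) is cyclic and generated by (the image of) a field automorphism of odd order dividing f. If x ∈ G is a rational element of prime power order with o(x) ∉ {1, 2}, then x ∈ Inn(S) and the order of x is odd. -/

import Mathlib

open CategoryTheory

/-- An element `x` of a finite group is *rational* if it is conjugate to every
generator of the cyclic group `⟨x⟩`. -/
def IsRationalElement {G : Type*} [Group G] (x : G) : Prop :=
  ∀ y : G, Subgroup.zpowers y = Subgroup.zpowers x → IsConj x y

instance : Fact (Nat.Prime 3) := ⟨by norm_num⟩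

/-- `SL₂(F)`. -/
abbrev SL2 (F : Type*) [CommRing F] := Matrix.SpecialLinearGroup (Fin 2) F

/-- `PSL₂(F) = SL₂(F)/Z(SL₂(F))`. -/
abbrev PSL2 (F : Type*) [CommRing F] := SL2 F ⧸ Subgroup.center (SL2 F)

/-- `PGL₂(F) = GL₂(F)/Z(GL₂(F))`. -/
abbrev PGL2 (F : Type*) [CommRing F] :=
  Matrix.GeneralLinearGroup (Fin 2) F ⧸
    Subgroup.center (Matrix.GeneralLinearGroup (Fin 2) F)

/-- The subgroup of inner automorphisms of `S` inside `Aut(S)`. -/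
def innAut (S : Type*) [Group S] : Subgroup (MulAut S) :=
  (MulAut.conj : S →* MulAut S).range

instance innAut_normal (S : Type*) [Group S] : (innAut S).Normal := by
  constructor
  rintro α ⟨s, rfl⟩ β
  refine ⟨β s, ?_⟩
  ext x
  simp [MulAut.conj]

/-- `α` is a field automorphism of `PSL₂(F)` if it is induced by a ring automorphism
of `F` applied entrywise. -/
def IsFieldAutPSL2 {F : Type*} [Field F] (α : MulAut (PSL2 F)) : Prop :=
  ∃ σ : F ≃+* F, ∀ A : SL2 F,
    α (QuotientGroup.mk A) =
      QuotientGroup.mk (Matrix.SpecialLinearGroup.map (σ : F →+* F) A)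

/-! ### Auxiliary lemmas -/

lemma aux_CH {F : Type*} [Field F] (M : Matrix (Fin 2) (Fin 2) F) :
    M * M = (Matrix.trace M) • M - (M.det) • 1 := by
  ext i j
  fin_cases i <;> fin_cases j <;>
    simp [Matrix.mul_apply, Fin.sum_univ_two, Matrix.trace_fin_two, Matrix.det_fin_two,
      Matrix.one_apply] <;> ring

lemma aux_scalar_smul {F : Type*} [Field F] (r : F) :
    (Matrix.scalar (Fin 2)) r = r • (1 : Matrix (Fin 2) (Fin 2) F) := by
  ext i j; simp [Matrix.scalar_apply, Matrix.one_apply, Matrix.diagonal]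

lemma aux_scalar_central {F : Type*} [Field F] (A : SL2 F) (r : F)
    (h : (↑A : Matrix (Fin 2) (Fin 2) F) = r • 1) : A ∈ Subgroup.center (SL2 F) := by
  refine Matrix.SpecialLinearGroup.mem_center_iff.mpr ⟨r, ?_, ?_⟩
  · have hd := A.property
    rw [h] at hd
    simpa [Matrix.det_smul] using hd
  · rw [aux_scalar_smul, h]

lemma aux_entry {F : Type*} [Field F] (r s : F)
    (h : r • (1 : Matrix (Fin 2) (Fin 2) F) = s • 1) : r = s := by
  have := congrFun (congrFun h 0) 0
  simpa using this

/-- `PSL₂(3^f)` has no element of order `4` when `f` is odd. -/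
lemma no_order_four {f : ℕ} (hf : Odd f) (s : PSL2 (GaloisField 3 f)) :
    orderOf s ≠ 4 := by
  intro h4
  set F := GaloisField 3 f with hF
  have hfne : f ≠ 0 := by rintro rfl; simp at hf
  letI : Fintype F := Fintype.ofFinite F
  have hcard : Fintype.card F = 3 ^ f := by
    rw [← Nat.card_eq_fintype_card]; exact GaloisField.card 3 f hfne
  have hmod : (3 : ℕ) ^ f % 4 = 3 := by
    obtain ⟨m, rfl⟩ := hf
    have h9 : (9 : ℕ) ^ m % 4 = 1 := by rw [Nat.pow_mod]; norm_num
    have h3 : (3:ℕ) ^ (2 * m + 1) = 3 * 9 ^ m := by rw [pow_succ, pow_mul]; ring_nf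
    rw [h3, Nat.mul_mod, h9]
  have hnsq : ¬ IsSquare (-1 : F) := by
    simp [FiniteField.isSquare_neg_one_iff, hcard, hmod]
  have h3F : (3 : F) = 0 := by
    have := CharP.cast_eq_zero F 3; exact_mod_cast this
  obtain ⟨A, rfl⟩ := QuotientGroup.mk_surjective s
  have hs1 : (QuotientGroup.mk A : PSL2 F) ≠ 1 := by
    intro h; rw [orderOf_eq_one_iff.mpr h] at h4; omega
  have hs2 : (QuotientGroup.mk A : PSL2 F) ^ 2 ≠ 1 := by
    intro h
    have := orderOf_dvd_of_pow_eq_one h; rw [h4] at this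
    exact absurd (Nat.le_of_dvd two_pos this) (by norm_num)
  have hs4 : A ^ 4 ∈ Subgroup.center (SL2 F) := by
    rw [← QuotientGroup.eq_one_iff]
    have h44 : ((QuotientGroup.mk (A^4)) : PSL2 F) = (QuotientGroup.mk A)^4 := rfl
    rw [h44, ← h4]; exact pow_orderOf_eq_one _
  obtain ⟨r, hr2, hrA⟩ := Matrix.SpecialLinearGroup.mem_center_iff.mp hs4
  have hr2' : r = 1 ∨ r = -1 := by
    have hsq : r ^ 2 = 1 := by simpa using hr2
    have : (r - 1) * (r + 1) = 0 := by linear_combination hsq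
    rcases mul_eq_zero.mp this with h | h
    · exact Or.inl (by linear_combination h)
    · exact Or.inr (by linear_combination h)
  set M := (A : Matrix (Fin 2) (Fin 2) F) with hM
  set t := Matrix.trace M with htdef
  have hdet : M.det = 1 := A.property
  have hCH : M * M = t • M - 1 := by rw [aux_CH, hdet, one_smul]
  have hA4 : M ^ 4 = r • (1 : Matrix (Fin 2) (Fin 2) F) := by
    rw [← aux_scalar_smul, hrA]
    simp [Matrix.SpecialLinearGroup.coe_pow]
    rfl
  have hM4 : M ^ 4 = (t^3 - 2*t) • M + (1 - t^2) • (1 : Matrix (Fin 2) (Fin 2) F) := by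
    have h22 : M^4 = (M*M) * (M*M) := by rw [show (4:ℕ) = 2+2 from rfl, pow_add, pow_two]
    rw [h22, hCH]
    have expand : (t • M - 1) * (t • M - 1)
        = (t*t) • (M * M) - t • M - t • M + 1 := by
      simp only [sub_mul, mul_sub, smul_mul_assoc, mul_smul_comm, one_mul, mul_one]
      module
    rw [expand, hCH]
    module
  rw [hA4] at hM4
  have key : (t^3 - 2*t) • M = (r - (1 - t^2)) • (1 : Matrix (Fin 2) (Fin 2) F) := by
    have h := eq_sub_of_add_eq hM4.symm
    rw [← sub_smul] at h; exact h
  by_cases hc : t^3 - 2*t = 0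
  · rw [hc, zero_smul] at key
    have h0 : r - (1 - t^2) = 0 := by
      have := aux_entry (r - (1 - t^2)) 0 (by rw [zero_smul, ← key])
      simpa using this
    rcases hr2' with rfl | rfl
    · rw [sub_sub_cancel] at h0
      have ht : t = 0 := pow_eq_zero_iff (n := 2) (by norm_num) |>.mp h0
      have hMM : M * M = -1 := by rw [hCH, ht]; simp
      apply hs2
      have h2 : ((QuotientGroup.mk A : PSL2 F))^2 = QuotientGroup.mk (A^2) := rfl
      rw [h2]
      refine (QuotientGroup.eq_one_iff _).mpr ?_
      refine aux_scalar_central (A^2) (-1) ?_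
      have : ((A^2 : SL2 F) : Matrix (Fin 2) (Fin 2) F) = M * M := by
        simp [Matrix.SpecialLinearGroup.coe_pow, pow_two]
        rfl
      rw [this, hMM]; simp
    · have ht2 : t ^ 2 = -1 := by linear_combination h0 + h3F
      exact hnsq ⟨t, by linear_combination -ht2⟩
  · have hMs : M = ((t^3-2*t)⁻¹ * (r - (1-t^2))) • (1 : Matrix (Fin 2) (Fin 2) F) := by
      have := congrArg (fun X => (t^3-2*t)⁻¹ • X) key
      simpa [smul_smul, inv_mul_cancel₀ hc] using this
    exact hs1 ((QuotientGroup.eq_one_iff _).mpr (aux_scalar_central A _ hMs))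

/-- Let `S = PSL₂(3^f)` (`f ≥ 3` odd) and `Inn(S) ≤ G ≤ Aut(S)` with `G/Inn(S)` cyclic,
generated by the image of a field automorphism of odd order dividing `f`. Then every
rational element of `G` of prime power order `∉ {1, 2}` lies in `Inn(S)` and has odd
order. -/
theorem rational_prime_power_elements (f : ℕ) (hf : Odd f) (hf3 : 3 ≤ f)
    (G : Subgroup (MulAut (PSL2 (GaloisField 3 f))))
    (hG : innAut (PSL2 (GaloisField 3 f)) ≤ G)
    (τ : ↥G) (hτ : IsFieldAutPSL2 (↑τ : MulAut (PSL2 (GaloisField 3 f))))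
    (hgen : ∀ y : ↥G ⧸ (innAut (PSL2 (GaloisField 3 f))).subgroupOf G,
      y ∈ Subgroup.zpowers (QuotientGroup.mk τ))
    (hodd : Odd (orderOf (QuotientGroup.mk τ :
      ↥G ⧸ (innAut (PSL2 (GaloisField 3 f))).subgroupOf G)))
    (hdvd : orderOf (QuotientGroup.mk τ :
      ↥G ⧸ (innAut (PSL2 (GaloisField 3 f))).subgroupOf G) ∣ f) :
    ∀ x : ↥G, IsRationalElement x → (∃ p k : ℕ, p.Prime ∧ orderOf x = p ^ k) →
      orderOf x ≠ 1 → orderOf x ≠ 2 →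
      (↑x : MulAut (PSL2 (GaloisField 3 f))) ∈ innAut (PSL2 (GaloisField 3 f)) ∧
        Odd (orderOf x) := by
  set F := GaloisField 3 f with hF
  set N := (innAut (PSL2 F)).subgroupOf G with hN
  intro x hrat hpk h1 h2
  obtain ⟨p, k, hp, hord⟩ := hpk
  set π := QuotientGroup.mk' N with hπ
  have hNx_of : (π x = 1) → (↑x : MulAut (PSL2 F)) ∈ innAut (PSL2 F) := fun hx1 =>
    Subgroup.mem_subgroupOf.mp ((QuotientGroup.eq_one_iff x).mp hx1)
  rcases hp.eq_two_or_odd' with rfl | hpodd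
  · -- p = 2 : derive a contradiction
    exfalso
    have hk2 : 2 ≤ k := by
      by_contra h
      push_neg at h
      interval_cases k
      · exact h1 (by simpa using hord)
      · exact h2 (by simpa using hord)
    have hd1 : orderOf (π x) ∣ 2^k := by
      rw [← hord]; exact orderOf_map_dvd π x
    have hd2 : orderOf (π x) ∣ orderOf (QuotientGroup.mk τ : ↥G ⧸ N) := by
      obtain ⟨m, hm⟩ := hgen (π x)
      apply orderOf_dvd_of_pow_eq_one
      rw [← hm, ← zpow_natCast, ← zpow_mul, mul_comm, zpow_mul, zpow_natCast,
        pow_orderOf_eq_one, one_zpow]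
    have hcop : Nat.Coprime (2^k) (orderOf (QuotientGroup.mk τ : ↥G ⧸ N)) :=
      Nat.Coprime.pow_left _ (Nat.coprime_two_left.mpr hodd)
    have hx1 : π x = 1 := by
      have hg := Nat.dvd_gcd hd1 hd2
      rw [Nat.Coprime] at hcop
      rw [hcop] at hg
      exact orderOf_eq_one_iff.mp (Nat.dvd_one.mp hg)
    obtain ⟨s, hs⟩ := hNx_of hx1
    have hcx : orderOf (↑x : MulAut (PSL2 F)) = 2^k := by
      rw [Subgroup.orderOf_coe, hord]
    have hdvd4 : (4:ℕ) ∣ orderOf s := by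
      have h42 : (4:ℕ) ∣ 2^k := by
        have : (2:ℕ)^2 ∣ 2^k := pow_dvd_pow 2 hk2
        simpa using this
      refine h42.trans ?_
      rw [← hcx, ← hs]
      exact orderOf_map_dvd MulAut.conj s
    have hne : orderOf s ≠ 0 := by
      have : 0 < orderOf s := orderOf_pos s
      omega
    obtain ⟨c, hc⟩ := hdvd4
    have hcne : c ≠ 0 := by rintro rfl; rw [hc] at hne; simp at hne
    have hofc : orderOf (s ^ c) = 4 := by
      rw [orderOf_pow, hc, Nat.gcd_eq_right (dvd_mul_left c 4), Nat.mul_div_cancel _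
        (Nat.pos_of_ne_zero hcne)]
    exact no_order_four hf _ hofc
  · -- p odd
    have hxodd : Odd (orderOf x) := hord ▸ hpodd.pow
    have hconj : IsConj x (x^2) := by
      apply hrat
      refine le_antisymm (Subgroup.zpowers_le.mpr ?_) (Subgroup.zpowers_le.mpr ?_)
      · exact Subgroup.mem_zpowers_iff.mpr ⟨2, by rw [show (2:ℤ) = ((2:ℕ):ℤ) from rfl, zpow_natCast]⟩
      · obtain ⟨m, hm⟩ := hxodd
        refine Subgroup.mem_zpowers_iff.mpr ⟨((m : ℤ) + 1), ?_⟩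
        have hnat : (x^2)^(m+1) = x := by
          rw [← pow_mul]
          have h2m : 2*(m+1) = orderOf x + 1 := by omega
          rw [h2m, pow_succ, pow_orderOf_eq_one, one_mul]
        rw [show ((m : ℤ) + 1) = ((m+1 : ℕ) : ℤ) by push_cast; ring, zpow_natCast]
        exact hnat
    obtain ⟨c, hc⟩ := isConj_iff.mp hconj
    have h := congrArg π hc
    rw [map_mul, map_mul, map_inv, map_pow] at h
    obtain ⟨i, hi⟩ := hgen (π c)
    obtain ⟨j, hj⟩ := hgen (π x)
    have hcomm : (π c) * (π x) = (π x) * (π c) := by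
      rw [← hi, ← hj]
      exact ((Commute.refl _).zpow_zpow i j).eq
    have h' : π x = (π x)^2 := by
      rw [← h, hcomm, mul_assoc, mul_inv_cancel, mul_one]
    have hx1 : π x = 1 := by
      rw [pow_two] at h'
      exact left_eq_mul.mp h'
    exact ⟨hNx_of hx1, hxodd⟩
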